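/- Let n ≥ 3. For all indices a, b, k ∈ {1,…,n} and all x ∈ ℝ^n ∖ {0}: (𝕃G_{(k)})_{ab}(x) = (4 n (n−2) C_n / r^{n−1}) ( δ_{ak} n_b + δ_{bk} n_a − δ_{ab} n_k + (n−2) n_a n_b n_k ), where r = |x| and n_a = x_a/r. -/

import Mathlib

open MeasureTheory Finset
open scoped ENNReal

noncomputable section

abbrev Euc (n : ℕ) : Type := EuclideanSpace ℝ (Fin n)

variable {n : ℕ}

/-- Partial derivative in coordinate direction `i`. -/
def pd (i : Fin n) (f : Euc n → ℝ) : Euc n → ℝ :=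
  fun x => fderiv ℝ f x (EuclideanSpace.single i 1)

/-- Iterated partial derivative along a list of coordinate directions. -/
def pdList : List (Fin n) → (Euc n → ℝ) → Euc n → ℝ
  | [], f => f
  | i :: L, f => pd i (pdList L f)

/-- The canonical list of coordinate directions associated to a multi-index. -/
def mlist (α : Fin n → ℕ) : List (Fin n) :=
  ((List.finRange n).map fun i => List.replicate (α i) i).flatten

/-- Multi-index partial derivative `∂_α`. -/
def mderiv (α : Fin n → ℕ) (f : Euc n → ℝ) : Euc n → ℝ :=
  pdList (mlist α) f

/-- The Euclidean Laplacian. -/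
def lap (f : Euc n → ℝ) : Euc n → ℝ :=
  fun x => ∑ i, pd i (pd i f) x

/-- The Euclidean conformal Killing operator `(𝕃 W)_{a b}`. -/
def cko (W : Euc n → Euc n) (a b : Fin n) : Euc n → ℝ :=
  fun x => pd a (fun y => W y b) x + pd b (fun y => W y a) x
    - (if a = b then 2 / (n : ℝ) else 0) * ∑ c, pd c (fun y => W y c) x

/-- The Euclidean vector Laplacian `(P̄ W)_a = ½ Σ_b ∂_b (𝕃W)_{a b}`. -/
def vecLap (W : Euc n → Euc n) : Euc n → Euc n :=
  fun x => (EuclideanSpace.equiv (Fin n) ℝ).symm fun a => (1 / 2) * ∑ b, pd b (cko W a b) x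

/-- `f` is positively homogeneous of degree `d`: `f (t • x) = t ^ d • f x` for `t > 0`, `x ≠ 0`. -/
def PosHomog {F : Type*} [SMul ℝ F] (d : ℝ) (f : Euc n → F) : Prop :=
  ∀ t : ℝ, 0 < t → ∀ x : Euc n, x ≠ 0 → f (t • x) = t ^ d • f x

/-- The surface measure on the unit sphere `S^{n-1} ⊆ ℝ^n`
((n-1)-dimensional Hausdorff measure restricted to the sphere). -/
def sphMeas (n : ℕ) : Measure (Euc n) :=
  (μH[(n : ℝ) - 1]).restrict (Metric.sphere (0 : Euc n) 1)

/-- `|S^{n-1}|`, the total surface measure of the unit sphere. -/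
def sphVol (n : ℕ) : ℝ := (sphMeas n Set.univ).toReal

/-- The constant `C_n = 1 / (4 (n-1) (n-2) |S^{n-1}|)`. -/
def Cconst (n : ℕ) : ℝ := 1 / (4 * ((n : ℝ) - 1) * ((n : ℝ) - 2) * sphVol n)

/-- The Green's function `G^{ab}` of the Euclidean vector Laplacian. -/
def GreenFn (n : ℕ) (a b : Fin n) (x : Euc n) : ℝ :=
  -2 * Cconst n * ‖x‖ ^ ((2 : ℝ) - n) *
    ((3 * (n : ℝ) - 2) * (if a = b then 1 else 0)
      + ((n : ℝ) - 2) ^ 2 * (x a / ‖x‖) * (x b / ‖x‖))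

/-- The `j`-th column `G_{(j)}` of the Green's function. -/
def GreenCol (n : ℕ) (j : Fin n) : Euc n → Euc n :=
  fun x => (EuclideanSpace.equiv (Fin n) ℝ).symm fun a => GreenFn n a j x

/-- The Japanese-bracket weight `⟨x⟩^{-n - p δ}`. -/
def jweight (n : ℕ) (p δ : ℝ) (x : Euc n) : ℝ :=
  (1 + ‖x‖ ^ 2) ^ ((-(n : ℝ) - p * δ) / 2)

/-- The finite set of multi-indices of total degree at most `k`. -/
def midx (n k : ℕ) : Finset (Fin n → Fin (k + 1)) :=
  Finset.univ.filter fun α => ∑ i, (α i : ℕ) ≤ k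

/-- The `p`-th power of the weighted Sobolev norm `‖f‖_{W^{k,p}_δ}`, with the integrals
taken over the set `s`. -/
def wnormPOn (p δ : ℝ) (k : ℕ) (f : Euc n → ℝ) (s : Set (Euc n)) : ℝ≥0∞ :=
  ∑ α ∈ midx n k,
    ∫⁻ x in s, ENNReal.ofReal (jweight n p δ x * |mderiv (fun i => (α i : ℕ)) f x| ^ p)

/-- The `p`-th power of the weighted Sobolev norm `‖f‖_{W^{k,p}_δ}`. -/
def wnormP (p δ : ℝ) (k : ℕ) (f : Euc n → ℝ) : ℝ≥0∞ := wnormPOn p δ k f Set.univ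

/-- The weighted Sobolev norm `‖f‖_{W^{k,p}_δ}` of a scalar function, valued in `ℝ≥0∞`. -/
def wnorm (p δ : ℝ) (k : ℕ) (f : Euc n → ℝ) : ℝ≥0∞ := wnormP p δ k f ^ (1 / p)

/-- The weighted Sobolev norm of a vector field: componentwise, summed. -/
def wnormV (p δ : ℝ) (k : ℕ) (F : Euc n → Euc n) : ℝ≥0∞ :=
  ∑ a, wnorm p δ k fun x => F x a

/-- A weight `δ` is nonexceptional if it is not an integer, or if `2 - n < δ < 0`. -/
def Nonexceptional (n : ℕ) (δ : ℝ) : Prop :=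
  (¬ ∃ m : ℤ, δ = m) ∨ (2 - (n : ℝ) < δ ∧ δ < 0)

lemma myFDerivNormRpow (s : ℝ) (x : Euc n) (hx : x ≠ 0) :
    HasFDerivAt (fun y : Euc n => ‖y‖ ^ s) ((s * ‖x‖ ^ (s - 2)) • innerSL ℝ x) x := by
  have hxn : (0:ℝ) < ‖x‖ := norm_pos_iff.mpr hx
  have hx2 : (‖x‖ ^ 2 : ℝ) ≠ 0 := by positivity
  have h1 : HasDerivAt (fun t : ℝ => t ^ (s/2)) ((s/2) * (‖x‖^2:ℝ) ^ (s/2 - 1)) (‖x‖^2) :=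
    Real.hasDerivAt_rpow_const (Or.inl hx2)
  have h2 : HasFDerivAt (fun y : Euc n => ‖y‖ ^ 2) (2 • innerSL ℝ x) x :=
    (hasStrictFDerivAt_norm_sq x).hasFDerivAt
  have h3 := h1.comp_hasFDerivAt x h2
  have hfun : ((fun t : ℝ => t ^ (s/2)) ∘ fun y : Euc n => (‖y‖^2 : ℝ))
      = fun y : Euc n => ‖y‖ ^ s := by
    funext y
    simp only [Function.comp_apply]
    rw [← Real.rpow_natCast ‖y‖ 2, ← Real.rpow_mul (norm_nonneg y)]
    congr 1
    push_cast
    ring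
  have hclm : ((s/2) * (‖x‖^2:ℝ) ^ (s/2 - 1)) • (2 • innerSL ℝ x)
      = (s * ‖x‖ ^ (s - 2)) • innerSL ℝ x := by
    ext y
    simp only [ContinuousLinearMap.smul_apply, smul_eq_mul, ContinuousLinearMap.coe_smul',
      Pi.smul_apply]
    rw [← Real.rpow_natCast ‖x‖ 2, ← Real.rpow_mul (norm_nonneg x)]
    rw [show (2:ℕ) * (s/2 - 1) = s - 2 by push_cast; ring]
    ring
  rw [hfun, hclm] at h3
  exact h3

lemma pd_green (a k c : Fin n) (x : Euc n) (hx : x ≠ 0) :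
    pd c (fun y => GreenFn n a k y) x =
      (-2*Cconst n*(3*(n:ℝ)-2)*(if a = k then (1:ℝ) else 0)) *
          (((2:ℝ)-(n:ℝ)) * ‖x‖ ^ (-(n:ℝ)) * x c)
      + (-2*Cconst n*((n:ℝ)-2)^2) *
        ( (x a * x k) * (-(n:ℝ) * ‖x‖ ^ (-(n:ℝ)-2) * x c)
          + ‖x‖ ^ (-(n:ℝ)) *
              (x a * (if k = c then (1:ℝ) else 0) + x k * (if a = c then (1:ℝ) else 0)) ) := by
  have hxn : (0:ℝ) < ‖x‖ := norm_pos_iff.mpr hx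
  set C := Cconst n with hC
  set δ := (if a = k then (1:ℝ) else 0) with hδ
  set H : Euc n → ℝ := fun y =>
    (-2*C*(3*(n:ℝ)-2)*δ) * ‖y‖ ^ ((2:ℝ)-(n:ℝ))
    + (-2*C*((n:ℝ)-2)^2) * (y a * y k * ‖y‖ ^ (-(n:ℝ))) with hH
  -- GreenFn agrees with H away from 0
  have hgeq : ∀ y : Euc n, y ≠ 0 → GreenFn n a k y = H y := by
    intro y hy
    have hyn : (0:ℝ) < ‖y‖ := norm_pos_iff.mpr hy
    have hsplit : ‖y‖ ^ ((2:ℝ)-(n:ℝ)) = ‖y‖ ^ (-(n:ℝ)) * ‖y‖^2 := by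
      rw [show (2:ℝ)-(n:ℝ) = -(n:ℝ) + 2 by ring, Real.rpow_add hyn,
        ← Real.rpow_natCast ‖y‖ 2]
      norm_num
    simp only [GreenFn, hH, hδ]
    rw [hsplit]
    rcases eq_or_ne a k with h | h
    · simp only [if_pos h]
      field_simp
      ring
    · simp only [if_neg h]
      field_simp
      ring
  -- derivative of H
  have d1 : HasFDerivAt (fun y : Euc n => ‖y‖ ^ ((2:ℝ)-(n:ℝ)))
      ((((2:ℝ)-(n:ℝ)) * ‖x‖ ^ ((2:ℝ)-(n:ℝ) - 2)) • innerSL ℝ x) x :=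
    myFDerivNormRpow _ x hx
  have dn : HasFDerivAt (fun y : Euc n => ‖y‖ ^ (-(n:ℝ)))
      ((-(n:ℝ) * ‖x‖ ^ (-(n:ℝ) - 2)) • innerSL ℝ x) x :=
    myFDerivNormRpow _ x hx
  have pa : HasFDerivAt (fun y : Euc n => y a) (EuclideanSpace.proj a : Euc n →L[ℝ] ℝ) x :=
    (EuclideanSpace.proj (𝕜 := ℝ) (ι := Fin n) a).hasFDerivAt (x := x)
  have pk : HasFDerivAt (fun y : Euc n => y k) (EuclideanSpace.proj k : Euc n →L[ℝ] ℝ) x :=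
    (EuclideanSpace.proj (𝕜 := ℝ) (ι := Fin n) k).hasFDerivAt (x := x)
  have p2 := pa.mul pk
  have p3 := p2.mul dn
  have hHd := ((d1.const_mul (-2*C*(3*(n:ℝ)-2)*δ)).add
    (p3.const_mul (-2*C*((n:ℝ)-2)^2)))
  -- pd of GreenFn = pd of H
  have hev : (fun y => GreenFn n a k y) =ᶠ[nhds x] H := by
    filter_upwards [isOpen_compl_singleton.mem_nhds hx] with y hy
    exact hgeq y hy
  have hfe : fderiv ℝ (fun y => GreenFn n a k y) x = fderiv ℝ H x := hev.fderiv_eq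
  have h22 : ((2:ℝ)-(n:ℝ) - 2) = -(n:ℝ) := by ring
  have hHd' : HasFDerivAt H _ x := hHd
  rw [pd, hfe, hHd'.fderiv]
  rw [h22]
  simp only [ContinuousLinearMap.add_apply, ContinuousLinearMap.smul_apply,
    ContinuousLinearMap.coe_smul', Pi.smul_apply, smul_eq_mul, innerSL_apply_apply, Pi.mul_apply,
    PiLp.proj_apply, EuclideanSpace.inner_single_right, RCLike.inner_apply,
    EuclideanSpace.single_apply, map_one, one_mul, starRingEnd_apply, star_trivial]

lemma norm_sq_sum (x : Euc n) : ∑ c, x c * x c = ‖x‖^2 := by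
  rw [EuclideanSpace.norm_eq, Real.sq_sqrt (by positivity)]
  exact Finset.sum_congr rfl fun i _ => by rw [Real.norm_eq_abs, sq_abs, sq]

lemma sum_pd_green (k : Fin n) (x : Euc n) (hx : x ≠ 0) :
    ∑ c, pd c (fun y => GreenFn n c k y) x
      = 4 * Cconst n * n * ((n:ℝ)-2) * ‖x‖ ^ (-(n:ℝ)) * x k := by
  have hxn : (0:ℝ) < ‖x‖ := norm_pos_iff.mpr hx
  have hR : ‖x‖ ^ (-(n:ℝ)-2) * ‖x‖^2 = ‖x‖ ^ (-(n:ℝ)) := by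
    rw [← Real.rpow_natCast ‖x‖ 2, ← Real.rpow_add hxn]
    norm_num
  have hsum : ∑ c, x c * x c = ‖x‖^2 := norm_sq_sum x
  have h1 : ∑ c, (if c = k then x c else 0) = x k := by simp
  have h2 : ∑ c, (if k = c then x c else 0) = x k := by simp
  calc ∑ c, pd c (fun y => GreenFn n c k y) x
      = ∑ c, ((-2*Cconst n*(3*(n:ℝ)-2)*((2:ℝ)-(n:ℝ))*‖x‖ ^ (-(n:ℝ))) * (if c = k then x c else 0)
          + (2*Cconst n*(n:ℝ)*((n:ℝ)-2)^2*‖x‖ ^ (-(n:ℝ)-2)*x k) * (x c * x c)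
          + (-2*Cconst n*((n:ℝ)-2)^2*‖x‖ ^ (-(n:ℝ))) * (if k = c then x c else 0)
          + (-2*Cconst n*((n:ℝ)-2)^2*‖x‖ ^ (-(n:ℝ))*x k)) := by
        refine Finset.sum_congr rfl fun c _ => ?_
        rw [pd_green c k c x hx]
        rcases eq_or_ne c k with h | h
        · subst h
          simp only [eq_self_iff_true, if_true, ite_true, if_pos rfl]
          ring
        · simp only [if_neg h, if_neg (Ne.symm h), eq_self_iff_true, if_true, ite_true,
            if_pos rfl]
          ring
    _ = (-2*Cconst n*(3*(n:ℝ)-2)*((2:ℝ)-(n:ℝ))*‖x‖ ^ (-(n:ℝ))) * x k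
          + (2*Cconst n*(n:ℝ)*((n:ℝ)-2)^2*‖x‖ ^ (-(n:ℝ)-2)*x k) * ‖x‖^2
          + (-2*Cconst n*((n:ℝ)-2)^2*‖x‖ ^ (-(n:ℝ))) * x k
          + (n:ℝ) * (-2*Cconst n*((n:ℝ)-2)^2*‖x‖ ^ (-(n:ℝ))*x k) := by
        rw [Finset.sum_add_distrib, Finset.sum_add_distrib, Finset.sum_add_distrib,
          ← Finset.mul_sum, ← Finset.mul_sum, ← Finset.mul_sum, h1, h2, hsum,
          Finset.sum_const, Finset.card_univ, Fintype.card_fin, nsmul_eq_mul]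
    _ = 4 * Cconst n * n * ((n:ℝ)-2) * ‖x‖ ^ (-(n:ℝ)) * x k := by
        linear_combination (2*Cconst n*(n:ℝ)*((n:ℝ)-2)^2*x k) * hR

theorem statement13 (n : ℕ) (hn : 3 ≤ n) (a b k : Fin n) (x : Euc n) (hx : x ≠ 0) :
    cko (GreenCol n k) a b x =
      4 * n * ((n : ℝ) - 2) * Cconst n / ‖x‖ ^ ((n : ℝ) - 1) *
        ((if a = k then 1 else 0) * (x b / ‖x‖) + (if b = k then 1 else 0) * (x a / ‖x‖)
          - (if a = b then 1 else 0) * (x k / ‖x‖)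
          + ((n : ℝ) - 2) * (x a / ‖x‖) * (x b / ‖x‖) * (x k / ‖x‖)) := by
  have hxn : (0:ℝ) < ‖x‖ := norm_pos_iff.mpr hx
  have hn0 : ((n:ℝ)) ≠ 0 := by
    have : (0:ℝ) < (n:ℝ) := by exact_mod_cast Nat.lt_of_lt_of_le (by norm_num) hn
    exact this.ne'
  have hcol : ∀ j : Fin n, (fun y => GreenCol n k y j) = fun y => GreenFn n j k y :=
    fun j => rfl
  have hsw : ∀ p q : Fin n, (if p = q then (1:ℝ) else 0) = if q = p then 1 else 0 :=
    fun p q => by simp [eq_comm]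
  have hR : ‖x‖ ^ (-(n:ℝ)) = ‖x‖ ^ (-(n:ℝ)-2) * ‖x‖^2 := by
    rw [← Real.rpow_natCast ‖x‖ 2, ← Real.rpow_add hxn]
    norm_num
  have hinv : (‖x‖ ^ ((n:ℝ)-1))⁻¹ = ‖x‖ ^ (-(n:ℝ)) * ‖x‖ := by
    rw [← Real.rpow_neg (norm_nonneg x), show -((n:ℝ)-1) = -(n:ℝ) + 1 by ring,
      Real.rpow_add hxn, Real.rpow_one]
  rw [cko, hcol a, hcol b]
  simp only [hcol]
  rw [sum_pd_green k x hx, pd_green b k a x hx, pd_green a k b x hx]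
  rw [show (if a = b then 2/(n:ℝ) else 0) = 2/(n:ℝ) * (if a = b then 1 else 0) by
    split <;> ring]
  rw [hsw k a, hsw k b, hsw b a]
  rw [div_eq_mul_inv _ (‖x‖ ^ ((n:ℝ)-1)), hinv, hR]
  set dak := (if a = k then (1:ℝ) else 0) with hdak
  set dbk := (if b = k then (1:ℝ) else 0) with hdbk
  set dab := (if a = b then (1:ℝ) else 0) with hdab
  field_simp
  ring
  

end
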